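/- arXiv:2603.27712 — 6 statements merged into one kernel-verified Lean document; each statement's English description precedes it below -/
import Mathlib

section
/- Let G : ℝ^d → ℝ be convex and s, β > 0. Then the function x ↦ log ∫_{ℝ^d} exp( G(z + x/(1+βs)) − ((1+βs)/(2s))|z|² ) dz is convex in x (assuming the integrals are finite for all x). -/
open Set MeasureTheory

theorem stmt3 {d : ℕ} (G : EuclideanSpace ℝ (Fin d) → ℝ) (s β : ℝ)
    (hs : 0 < s) (hβ : 0 < β) (hG : ConvexOn ℝ Set.univ G)
    (hint : ∀ x : EuclideanSpace ℝ (Fin d), Integrable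
      (fun z : EuclideanSpace ℝ (Fin d) =>
        Real.exp (G (z + (1 / (1 + β * s)) • x) - (1 + β * s) / (2 * s) * ‖z‖ ^ 2))) :
    ConvexOn ℝ Set.univ (fun x : EuclideanSpace ℝ (Fin d) =>
      Real.log (∫ z : EuclideanSpace ℝ (Fin d),
        Real.exp (G (z + (1 / (1 + β * s)) • x) - (1 + β * s) / (2 * s) * ‖z‖ ^ 2))) := by
  set c : ℝ := 1 / (1 + β * s) with hc
  set q : ℝ := (1 + β * s) / (2 * s) with hq
  set F : EuclideanSpace ℝ (Fin d) → EuclideanSpace ℝ (Fin d) → ℝ :=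
    fun x z => Real.exp (G (z + c • x) - q * ‖z‖ ^ 2) with hF
  set I : EuclideanSpace ℝ (Fin d) → ℝ := fun x => ∫ z, F x z with hI
  have hFpos : ∀ x z, 0 < F x z := fun x z => Real.exp_pos _
  have hIpos : ∀ x, 0 < I x := fun x => integral_exp_pos (hint x)
  refine ⟨convex_univ, fun x _ y _ a b ha hb hab => ?_⟩
  rcases ha.eq_or_lt with rfl | ha'
  · simp only [zero_smul, zero_add, zero_mul] at hab ⊢
    subst hab; simp [one_smul]
  rcases hb.eq_or_lt with rfl | hb'
  · simp only [zero_smul, add_zero, zero_mul] at hab ⊢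
    subst hab; simp [one_smul]
  -- pointwise convexity: F (a•x+b•y) z ≤ F x z ^ a * F y z ^ b
  have hpt : ∀ z, F (a • x + b • y) z ≤ F x z ^ a * F y z ^ b := by
    intro z
    have haff : z + c • (a • x + b • y) = a • (z + c • x) + b • (z + c • y) := by
      rw [show b = 1 - a by linarith]
      module
    have hGle : G (z + c • (a • x + b • y)) ≤ a * G (z + c • x) + b * G (z + c • y) := by
      rw [haff]
      simpa using hG.2 (mem_univ (z + c • x)) (mem_univ (z + c • y)) ha hb hab
    have : G (z + c • (a • x + b • y)) - q * ‖z‖ ^ 2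
        ≤ a * (G (z + c • x) - q * ‖z‖ ^ 2) + b * (G (z + c • y) - q * ‖z‖ ^ 2) := by
      have : a * (G (z + c • x) - q * ‖z‖ ^ 2) + b * (G (z + c • y) - q * ‖z‖ ^ 2)
          = a * G (z + c • x) + b * G (z + c • y) - (a + b) * (q * ‖z‖ ^ 2) := by ring
      rw [this, hab, one_mul]
      linarith [hGle]
    calc F (a • x + b • y) z
        ≤ Real.exp (a * (G (z + c • x) - q * ‖z‖ ^ 2) + b * (G (z + c • y) - q * ‖z‖ ^ 2)) :=
          Real.exp_le_exp.2 this
      _ = F x z ^ a * F y z ^ b := by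
          rw [Real.exp_add, mul_comm a _, mul_comm b _, Real.exp_mul, Real.exp_mul]
  -- Hölder via lintegral
  have hofReal : ∀ w : EuclideanSpace ℝ (Fin d),
      ENNReal.ofReal (I w) = ∫⁻ z, ENNReal.ofReal (F w z) := by
    intro w
    exact ofReal_integral_eq_lintegral_ofReal (hint w)
      (Filter.Eventually.of_forall fun z => (hFpos w z).le)
  have hmeas : ∀ w : EuclideanSpace ℝ (Fin d),
      AEMeasurable (fun z => ENNReal.ofReal (F w z)) := fun w =>
    ENNReal.measurable_ofReal.comp_aemeasurable (hint w).aestronglyMeasurable.aemeasurable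
  have hconj : (1/a : ℝ).HolderConjugate (1/b) := by
    rw [Real.holderConjugate_iff]; constructor
    · rw [lt_div_iff₀ ha']; linarith
    · rw [one_div, one_div, inv_inv, inv_inv]; exact hab
  have key : ENNReal.ofReal (I (a • x + b • y))
      ≤ ENNReal.ofReal (I x) ^ a * ENNReal.ofReal (I y) ^ b := by
    rw [hofReal, hofReal, hofReal]
    calc (∫⁻ z, ENNReal.ofReal (F (a • x + b • y) z))
        ≤ ∫⁻ z, (ENNReal.ofReal (F x z)) ^ a * (ENNReal.ofReal (F y z)) ^ b := by
          refine lintegral_mono fun z => ?_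
          calc ENNReal.ofReal (F (a • x + b • y) z)
              ≤ ENNReal.ofReal (F x z ^ a * F y z ^ b) := ENNReal.ofReal_le_ofReal (hpt z)
            _ = (ENNReal.ofReal (F x z)) ^ a * (ENNReal.ofReal (F y z)) ^ b := by
                rw [ENNReal.ofReal_mul (Real.rpow_nonneg (hFpos x z).le a),
                  ENNReal.ofReal_rpow_of_nonneg (hFpos x z).le ha,
                  ENNReal.ofReal_rpow_of_nonneg (hFpos y z).le hb]
      _ ≤ (∫⁻ z, ((ENNReal.ofReal (F x z)) ^ a) ^ (1/a : ℝ)) ^ (1/(1/a : ℝ))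
          * (∫⁻ z, ((ENNReal.ofReal (F y z)) ^ b) ^ (1/b : ℝ)) ^ (1/(1/b : ℝ)) := by
          refine ENNReal.lintegral_mul_le_Lp_mul_Lq volume hconj ?_ ?_
          · exact ((hmeas x).pow_const _)
          · exact ((hmeas y).pow_const _)
      _ = (∫⁻ z, ENNReal.ofReal (F x z)) ^ a * (∫⁻ z, ENNReal.ofReal (F y z)) ^ b := by
          rw [one_div_one_div, one_div_one_div]
          congr 1
          · congr 1
            refine lintegral_congr fun z => ?_
            rw [← ENNReal.rpow_mul, mul_one_div, div_self ha'.ne', ENNReal.rpow_one]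
          · congr 1
            refine lintegral_congr fun z => ?_
            rw [← ENNReal.rpow_mul, mul_one_div, div_self hb'.ne', ENNReal.rpow_one]
  -- back to reals
  have hreal : I (a • x + b • y) ≤ I x ^ a * I y ^ b := by
    have hrhs : ENNReal.ofReal (I x) ^ a * ENNReal.ofReal (I y) ^ b
        = ENNReal.ofReal (I x ^ a * I y ^ b) := by
      rw [ENNReal.ofReal_mul (Real.rpow_nonneg (hIpos x).le a),
        ENNReal.ofReal_rpow_of_nonneg (hIpos x).le ha,
        ENNReal.ofReal_rpow_of_nonneg (hIpos y).le hb]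
    rw [hrhs] at key
    exact (ENNReal.ofReal_le_ofReal_iff
      (by positivity)).1 key
  calc Real.log (I (a • x + b • y)) ≤ Real.log (I x ^ a * I y ^ b) :=
        Real.log_le_log (hIpos _) hreal
    _ = a * Real.log (I x) + b * Real.log (I y) := by
        rw [Real.log_mul (Real.rpow_pos_of_pos (hIpos x) a).ne'
            (Real.rpow_pos_of_pos (hIpos y) b).ne',
          Real.log_rpow (hIpos x), Real.log_rpow (hIpos y)]
end

section
/- Let φ : ℝ^d → ℝ be β-convex with β > 0, let 0 < s, and define u_s(x) := log( (2πs)^{−d/2} ∫ exp(φ(y) − |x−y|²/(2s)) dy ), assumed finite for all x. Then the function x ↦ u_s(x) + (κ(s)/2)|x|² is convex, where κ(s) := β/(1+βs). In particular D²u_s ⪰ −κ(s)·Id in the sense of distributions (or wherever u_s is twice differentiable). -/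
open Set MeasureTheory

open MeasureTheory Real in
lemma holder_aux {α : Type*} [MeasurableSpace α] {μ : Measure α} {F₀ F₁ H : α → ℝ} {p q : ℝ}
    (hp : 0 < p) (hq : 0 < q) (hpq : p + q = 1)
    (h0 : ∀ x, 0 ≤ F₀ x) (h1 : ∀ x, 0 ≤ F₁ x) (hH0 : ∀ x, 0 ≤ H x)
    (hF₀ : Integrable F₀ μ) (hF₁ : Integrable F₁ μ) (hH : Integrable H μ)
    (hle : ∀ x, H x ≤ F₀ x ^ p * F₁ x ^ q) :
    ∫ x, H x ∂μ ≤ (∫ x, F₀ x ∂μ) ^ p * (∫ x, F₁ x ∂μ) ^ q := by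
  rw [← ENNReal.ofReal_le_ofReal_iff
    (mul_nonneg (rpow_nonneg (integral_nonneg h0) p) (rpow_nonneg (integral_nonneg h1) q))]
  rw [MeasureTheory.ofReal_integral_eq_lintegral_ofReal hH (Filter.Eventually.of_forall hH0)]
  have key := ENNReal.lintegral_mul_norm_pow_le (μ := μ)
      (hF₀.aemeasurable.ennreal_ofReal) (hF₁.aemeasurable.ennreal_ofReal) hp.le hq.le hpq
  refine le_trans (le_trans (lintegral_mono fun x => ?_) key) ?_
  · rw [ENNReal.ofReal_rpow_of_nonneg (h0 x) hp.le, ENNReal.ofReal_rpow_of_nonneg (h1 x) hq.le,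
      ← ENNReal.ofReal_mul (rpow_nonneg (h0 x) p)]
    exact ENNReal.ofReal_le_ofReal (hle x)
  · rw [← MeasureTheory.ofReal_integral_eq_lintegral_ofReal hF₀ (.of_forall h0),
      ← MeasureTheory.ofReal_integral_eq_lintegral_ofReal hF₁ (.of_forall h1),
      ENNReal.ofReal_rpow_of_nonneg (integral_nonneg h0) hp.le,
      ENNReal.ofReal_rpow_of_nonneg (integral_nonneg h1) hq.le,
      ← ENNReal.ofReal_mul (rpow_nonneg (integral_nonneg h0) p)]

theorem stmt4 {d : ℕ} (β s : ℝ) (hβ : 0 < β) (hs : 0 < s)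
    (φ : EuclideanSpace ℝ (Fin d) → ℝ)
    (hφ : ConvexOn ℝ Set.univ (fun x => φ x + β / 2 * ‖x‖ ^ 2))
    (hint : ∀ x : EuclideanSpace ℝ (Fin d), Integrable
      (fun y : EuclideanSpace ℝ (Fin d) => Real.exp (φ y - ‖x - y‖ ^ 2 / (2 * s)))) :
    ConvexOn ℝ Set.univ (fun x : EuclideanSpace ℝ (Fin d) =>
      Real.log ((2 * Real.pi * s) ^ (-(d : ℝ) / 2) *
        ∫ y : EuclideanSpace ℝ (Fin d), Real.exp (φ y - ‖x - y‖ ^ 2 / (2 * s)))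
      + (β / (1 + β * s)) / 2 * ‖x‖ ^ 2) := by
  have ha : (0:ℝ) < 1 + β * s := by nlinarith
  have ha0 : (1:ℝ) + β * s ≠ 0 := ne_of_gt ha
  have hs0 : s ≠ 0 := ne_of_gt hs
  set a : ℝ := 1 + β * s with ha'
  set c : ℝ := 1 / (2 * s * a) with hc'
  -- key algebraic identity
  have key : ∀ x y : EuclideanSpace ℝ (Fin d),
      φ y - ‖x - y‖ ^ 2 / (2 * s) + (β / a) / 2 * ‖x‖ ^ 2
      = (φ y + β / 2 * ‖y‖ ^ 2) - c * ‖x - a • y‖ ^ 2 := by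
    intro x y
    have h1 : ‖x - y‖ ^ 2 = ‖x‖ ^ 2 - 2 * inner ℝ x y + ‖y‖ ^ 2 := norm_sub_sq_real x y
    have h2 : ‖x - a • y‖ ^ 2
        = ‖x‖ ^ 2 - 2 * (a * inner ℝ x y) + a ^ 2 * ‖y‖ ^ 2 := by
      rw [norm_sub_sq_real, real_inner_smul_right, norm_smul, Real.norm_eq_abs, mul_pow, sq_abs]
    rw [h1, h2, hc', ha']
    field_simp
    ring
  -- the modified integrand
  set I : EuclideanSpace ℝ (Fin d) → ℝ := fun x =>
    ∫ y : EuclideanSpace ℝ (Fin d), Real.exp ((φ y + β / 2 * ‖y‖ ^ 2) - c * ‖x - a • y‖ ^ 2)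
    with hI'
  have hIeq : ∀ x : EuclideanSpace ℝ (Fin d),
      (fun y : EuclideanSpace ℝ (Fin d) =>
          Real.exp ((φ y + β / 2 * ‖y‖ ^ 2) - c * ‖x - a • y‖ ^ 2))
      = fun y : EuclideanSpace ℝ (Fin d) =>
          Real.exp (φ y - ‖x - y‖ ^ 2 / (2 * s)) * Real.exp ((β / a) / 2 * ‖x‖ ^ 2) := by
    intro x; funext y
    rw [← key x y, Real.exp_add]
  have hIint : ∀ x : EuclideanSpace ℝ (Fin d),
      Integrable (fun y : EuclideanSpace ℝ (Fin d) =>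
        Real.exp ((φ y + β / 2 * ‖y‖ ^ 2) - c * ‖x - a • y‖ ^ 2)) := by
    intro x
    rw [hIeq x]
    exact (hint x).mul_const _
  have hJpos : ∀ x : EuclideanSpace ℝ (Fin d),
      0 < ∫ y : EuclideanSpace ℝ (Fin d), Real.exp (φ y - ‖x - y‖ ^ 2 / (2 * s)) :=
    fun x => integral_exp_pos (hint x)
  have hIval : ∀ x : EuclideanSpace ℝ (Fin d), I x =
      (∫ y : EuclideanSpace ℝ (Fin d), Real.exp (φ y - ‖x - y‖ ^ 2 / (2 * s)))
        * Real.exp ((β / a) / 2 * ‖x‖ ^ 2) := by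
    intro x
    rw [hI']
    dsimp only
    rw [hIeq x, integral_mul_const]
  have hIpos : ∀ x : EuclideanSpace ℝ (Fin d), 0 < I x := by
    intro x
    rw [hIval x]
    exact mul_pos (hJpos x) (Real.exp_pos _)
  have hC : (0:ℝ) < (2 * Real.pi * s) ^ (-(d : ℝ) / 2) :=
    Real.rpow_pos_of_pos (by positivity) _
  -- rewrite the goal function
  have hfun : (fun x : EuclideanSpace ℝ (Fin d) =>
      Real.log ((2 * Real.pi * s) ^ (-(d : ℝ) / 2) *
        ∫ y : EuclideanSpace ℝ (Fin d), Real.exp (φ y - ‖x - y‖ ^ 2 / (2 * s)))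
      + (β / a) / 2 * ‖x‖ ^ 2)
      = fun x : EuclideanSpace ℝ (Fin d) =>
          Real.log ((2 * Real.pi * s) ^ (-(d : ℝ) / 2)) + Real.log (I x) := by
    funext x
    rw [hIval x, Real.log_mul (ne_of_gt (hJpos x)) (ne_of_gt (Real.exp_pos _)),
      Real.log_exp, Real.log_mul (ne_of_gt hC) (ne_of_gt (hJpos x))]
    ring
  rw [hfun]
  refine ⟨convex_univ, ?_⟩
  intro x₀ _ x₁ _ p q hp hq hpq
  rcases eq_or_lt_of_le hp with hp0 | hp0
  · have hq1 : q = 1 := by linarith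
    simp [← hp0, hq1]
  rcases eq_or_lt_of_le hq with hq0 | hq0
  · have hp1 : p = 1 := by linarith
    simp [← hq0, hp1]
  have hq1 : q = 1 - p := by linarith
  subst hq1
  -- main inequality
  set xl : EuclideanSpace ℝ (Fin d) := p • x₀ + (1 - p) • x₁ with hxl
  set v₀ : EuclideanSpace ℝ (Fin d) := a⁻¹ • (x₀ - xl) with hv₀
  set v₁ : EuclideanSpace ℝ (Fin d) := a⁻¹ • (x₁ - xl) with hv₁
  have haa : a ≠ 0 := ne_of_gt ha
  have hvec₀ : ∀ y : EuclideanSpace ℝ (Fin d), x₀ - a • (y + v₀) = xl - a • y := by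
    intro y
    rw [hv₀, smul_add, smul_smul, mul_inv_cancel₀ haa, one_smul]
    abel
  have hvec₁ : ∀ y : EuclideanSpace ℝ (Fin d), x₁ - a • (y + v₁) = xl - a • y := by
    intro y
    rw [hv₁, smul_add, smul_smul, mul_inv_cancel₀ haa, one_smul]
    abel
  have hcomb : ∀ y : EuclideanSpace ℝ (Fin d), p • (y + v₀) + (1 - p) • (y + v₁) = y := by
    intro y
    rw [hv₀, hv₁, hxl]
    module
  have hmain : I xl ≤ (I x₀) ^ p * (I x₁) ^ (1 - p) := by
    have hh := holder_aux (μ := (volume : Measure (EuclideanSpace ℝ (Fin d))))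
      (F₀ := fun y : EuclideanSpace ℝ (Fin d) => Real.exp ((φ (y + v₀) + β / 2 * ‖y + v₀‖ ^ 2)
        - c * ‖x₀ - a • (y + v₀)‖ ^ 2))
      (F₁ := fun y : EuclideanSpace ℝ (Fin d) => Real.exp ((φ (y + v₁) + β / 2 * ‖y + v₁‖ ^ 2)
        - c * ‖x₁ - a • (y + v₁)‖ ^ 2))
      (H := fun y : EuclideanSpace ℝ (Fin d) =>
        Real.exp ((φ y + β / 2 * ‖y‖ ^ 2) - c * ‖xl - a • y‖ ^ 2))
      hp0 hq0 (by ring) (fun y => (Real.exp_pos _).le) (fun y => (Real.exp_pos _).le)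
      (fun y => (Real.exp_pos _).le) ((hIint x₀).comp_add_right v₀) ((hIint x₁).comp_add_right v₁)
      (hIint xl) ?_
    · calc I xl ≤ _ := hh
        _ = (I x₀) ^ p * (I x₁) ^ (1 - p) := by
          rw [integral_add_right_eq_self (μ := (volume : Measure (EuclideanSpace ℝ (Fin d))))
              (fun z : EuclideanSpace ℝ (Fin d) =>
                Real.exp ((φ z + β / 2 * ‖z‖ ^ 2) - c * ‖x₀ - a • z‖ ^ 2)) v₀,
            integral_add_right_eq_self (μ := (volume : Measure (EuclideanSpace ℝ (Fin d))))
              (fun z : EuclideanSpace ℝ (Fin d) =>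
                Real.exp ((φ z + β / 2 * ‖z‖ ^ 2) - c * ‖x₁ - a • z‖ ^ 2)) v₁]
    · intro y
      rw [hvec₀ y, hvec₁ y, ← Real.exp_mul, ← Real.exp_mul, ← Real.exp_add]
      apply Real.exp_le_exp.2
      have hψ := hφ.2 (Set.mem_univ (y + v₀)) (Set.mem_univ (y + v₁)) hp0.le
        (by linarith : (0:ℝ) ≤ 1 - p) (by ring)
      rw [hcomb y] at hψ
      simp only [smul_eq_mul] at hψ
      nlinarith [hψ]
  have hlog := Real.log_le_log (hIpos xl) hmain
  rw [Real.log_mul (ne_of_gt (Real.rpow_pos_of_pos (hIpos x₀) _))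
      (ne_of_gt (Real.rpow_pos_of_pos (hIpos x₁) _)),
    Real.log_rpow (hIpos x₀), Real.log_rpow (hIpos x₁)] at hlog
  simp only [smul_eq_mul]
  linarith [hlog]
end

section
/- Let u : ℝ^d → ℝ be twice continuously differentiable with D²u(y) + β·Id positive definite for all y, and for each x let Y(x) be the unique solution of ∇u(Y(x)) = β(x − Y(x)). Define v(x) := u(Y(x)) + (β/2)|x − Y(x)|². Then ∇v(x) = β(x − Y(x)) = ∇u(Y(x)) and D²v(x) = β·Id − β²(D²u(Y(x)) + β·Id)^{−1}. -/
open Set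
open scoped RealInnerProductSpace

noncomputable def Amap {d : ℕ} (u : EuclideanSpace ℝ (Fin d) → ℝ) (β : ℝ)
    (y : EuclideanSpace ℝ (Fin d)) :
    EuclideanSpace ℝ (Fin d) →L[ℝ] EuclideanSpace ℝ (Fin d) :=
  fderiv ℝ (gradient u) y + β • ContinuousLinearMap.id ℝ (EuclideanSpace ℝ (Fin d))

lemma Amap_apply {d : ℕ} (u : EuclideanSpace ℝ (Fin d) → ℝ) (β : ℝ)
    (y w : EuclideanSpace ℝ (Fin d)) :
    Amap u β y w = fderiv ℝ (gradient u) y w + β • w := by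
  simp [Amap]

lemma Amap_bij {d : ℕ} (β : ℝ) (u : EuclideanSpace ℝ (Fin d) → ℝ)
    (hpos : ∀ y : EuclideanSpace ℝ (Fin d), ∀ v : EuclideanSpace ℝ (Fin d), v ≠ 0 →
      0 < (inner ℝ (fderiv ℝ (gradient u) y v + β • v) v : ℝ))
    (y : EuclideanSpace ℝ (Fin d)) : Function.Bijective (Amap u β y) := by
  have hinj : Function.Injective (Amap u β y) := by
    intro a b hab
    by_contra hne
    have h0 : Amap u β y (a - b) = 0 := by rw [map_sub, hab, sub_self]
    have h1 : 0 < ⟪Amap u β y (a - b), a - b⟫ := by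
      rw [Amap_apply]; exact hpos y (a - b) (sub_ne_zero.2 hne)
    rw [h0, inner_zero_left] at h1
    exact lt_irrefl 0 h1
  exact ⟨hinj, LinearMap.injective_iff_surjective.mp hinj⟩

noncomputable def Aeq {d : ℕ} (u : EuclideanSpace ℝ (Fin d) → ℝ) (β : ℝ)
    (hbij : ∀ y : EuclideanSpace ℝ (Fin d), Function.Bijective (Amap u β y))
    (y : EuclideanSpace ℝ (Fin d)) :
    EuclideanSpace ℝ (Fin d) ≃L[ℝ] EuclideanSpace ℝ (Fin d) :=
  (LinearEquiv.ofBijective ((Amap u β y) : EuclideanSpace ℝ (Fin d) →ₗ[ℝ] EuclideanSpace ℝ (Fin d))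
    (hbij y)).toContinuousLinearEquiv

lemma Aeq_coe {d : ℕ} (u : EuclideanSpace ℝ (Fin d) → ℝ) (β : ℝ)
    (hbij : ∀ y : EuclideanSpace ℝ (Fin d), Function.Bijective (Amap u β y))
    (y : EuclideanSpace ℝ (Fin d)) :
    ((Aeq u β hbij y) : EuclideanSpace ℝ (Fin d) →L[ℝ] EuclideanSpace ℝ (Fin d)) = Amap u β y := by
  ext w; rfl

lemma grad_contDiff {d : ℕ} (u : EuclideanSpace ℝ (Fin d) → ℝ) (hu : ContDiff ℝ 2 u) :
    ContDiff ℝ 1 (gradient u) := by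
  have h1 : ContDiff ℝ 1 (fderiv ℝ u) := hu.fderiv_right (by norm_num)
  have h2 : gradient u = fun y =>
      (InnerProductSpace.toDual ℝ (EuclideanSpace ℝ (Fin d))).symm (fderiv ℝ u y) := rfl
  rw [h2]
  exact ((InnerProductSpace.toDual ℝ (EuclideanSpace ℝ (Fin d))).symm.contDiff).comp h1

lemma fderiv_apply_eq_inner {d : ℕ} (u : EuclideanSpace ℝ (Fin d) → ℝ)
    (y w : EuclideanSpace ℝ (Fin d)) :
    fderiv ℝ u y w = ⟪gradient u y, w⟫ := by
  have : InnerProductSpace.toDual ℝ (EuclideanSpace ℝ (Fin d)) (gradient u y) = fderiv ℝ u y := by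
    simp [gradient]
  rw [← this, InnerProductSpace.toDual_apply_apply]

theorem stmt7 {d : ℕ} (β : ℝ) (hβ : 0 < β)
    (u : EuclideanSpace ℝ (Fin d) → ℝ) (hu : ContDiff ℝ 2 u)
    (hpos : ∀ y : EuclideanSpace ℝ (Fin d), ∀ v : EuclideanSpace ℝ (Fin d), v ≠ 0 →
      0 < (inner ℝ (fderiv ℝ (gradient u) y v + β • v) v : ℝ))
    (Y : EuclideanSpace ℝ (Fin d) → EuclideanSpace ℝ (Fin d))
    (hY : ∀ x, gradient u (Y x) = β • (x - Y x))
    (v : EuclideanSpace ℝ (Fin d) → ℝ)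
    (hv : ∀ x, v x = u (Y x) + β / 2 * ‖x - Y x‖ ^ 2) :
    ∀ x, gradient v x = β • (x - Y x) ∧ gradient v x = gradient u (Y x) ∧
      fderiv ℝ (gradient v) x =
        β • ContinuousLinearMap.id ℝ (EuclideanSpace ℝ (Fin d)) -
          (β ^ 2) • Ring.inverse
            (fderiv ℝ (gradient u) (Y x) +
              β • ContinuousLinearMap.id ℝ (EuclideanSpace ℝ (Fin d))) := by
  have hgrad : ContDiff ℝ 1 (gradient u) := grad_contDiff u hu
  have hbij := Amap_bij β u hpos
  set G : EuclideanSpace ℝ (Fin d) → EuclideanSpace ℝ (Fin d) :=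
    fun y => gradient u y + β • y with hGdef
  have hGderiv : ∀ y, HasFDerivAt G (Amap u β y) y := by
    intro y
    exact ((hgrad.differentiable one_ne_zero y).hasFDerivAt).add ((hasFDerivAt_id y).const_smul β)
  have hGstrict : ∀ y, HasStrictFDerivAt G (Amap u β y) y := fun y =>
    ((hgrad.add (contDiff_id.const_smul β)).contDiffAt).hasStrictFDerivAt' (hGderiv y) one_ne_zero
  have hGY : ∀ x, G (Y x) = β • x := by
    intro x
    simp only [hGdef, hY x, smul_sub]
    abel
  have hGinj : Function.Injective G := by
    intro a b hab
    by_contra hne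
    set w := a - b with hwdef
    have hw0 : w ≠ 0 := sub_ne_zero.2 hne
    set φ : ℝ → ℝ := fun t => ⟪w, G (b + t • w)⟫ with hφdef
    have hφ : ∀ t : ℝ, HasDerivAt φ ⟪w, Amap u β (b + t • w) w⟫ t := by
      intro t
      have hline : HasDerivAt (fun t : ℝ => b + t • w) w t := by
        simpa using ((hasDerivAt_id t).smul_const w).const_add b
      have hG : HasDerivAt (fun t : ℝ => G (b + t • w)) (Amap u β (b + t • w) w) t :=
        by have := (hGderiv (b + t • w)).comp_hasDerivAt t hline; exact this
      simpa using (hasDerivAt_const t w).inner ℝ hG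
    have hmono : StrictMono φ := by
      apply strictMono_of_deriv_pos
      intro t
      rw [(hφ t).deriv]
      rw [real_inner_comm]
      rw [Amap_apply]
      exact hpos _ w hw0
    have h01 : φ 0 < φ 1 := hmono zero_lt_one
    have he0 : φ 0 = ⟪w, G b⟫ := by simp [hφdef]
    have he1 : φ 1 = ⟪w, G a⟫ := by
      have hba : b + (1 : ℝ) • w = a := by rw [one_smul, hwdef]; abel
      simp only [hφdef, hba]
    rw [he0, he1, hab] at h01
    exact lt_irrefl _ h01
  -- differentiability of Y
  set DY : EuclideanSpace ℝ (Fin d) →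
      (EuclideanSpace ℝ (Fin d) →L[ℝ] EuclideanSpace ℝ (Fin d)) :=
    fun x => β • ((Aeq u β hbij (Y x)).symm :
      EuclideanSpace ℝ (Fin d) →L[ℝ] EuclideanSpace ℝ (Fin d)) with hDYdef
  have hYdiff : ∀ x, HasFDerivAt Y (DY x) x := by
    intro x
    have hs : HasStrictFDerivAt G ((Aeq u β hbij (Y x) :
        EuclideanSpace ℝ (Fin d) →L[ℝ] EuclideanSpace ℝ (Fin d))) (Y x) := by
      rw [Aeq_coe]; exact hGstrict (Y x)
    set g := hs.localInverse G _ _ with hgdef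
    have hginv : HasStrictFDerivAt g (((Aeq u β hbij (Y x)).symm :
        EuclideanSpace ℝ (Fin d) →L[ℝ] EuclideanSpace ℝ (Fin d))) (β • x) := by
      rw [← hGY x]; exact hs.to_localInverse
    have hre : ∀ᶠ y in nhds (β • x), G (g y) = y := by
      rw [← hGY x]; exact hs.eventually_right_inverse
    have heq : (fun x' => g (β • x')) =ᶠ[nhds x] Y := by
      have hcont : Filter.Tendsto (fun x' : EuclideanSpace ℝ (Fin d) => β • x')
          (nhds x) (nhds (β • x)) := ((continuous_id.const_smul β).tendsto x)
      filter_upwards [hcont.eventually hre] with x' hx'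
      exact hGinj (by rw [hx', hGY x'])
    have h1 : HasFDerivAt (fun x' : EuclideanSpace ℝ (Fin d) => β • x')
        (β • ContinuousLinearMap.id ℝ (EuclideanSpace ℝ (Fin d))) x :=
      (hasFDerivAt_id x).const_smul β
    have h2 := (hginv.hasFDerivAt.comp x h1).congr_of_eventuallyEq heq.symm
    have h3 : (((Aeq u β hbij (Y x)).symm :
        EuclideanSpace ℝ (Fin d) →L[ℝ] EuclideanSpace ℝ (Fin d))).comp
        (β • ContinuousLinearMap.id ℝ (EuclideanSpace ℝ (Fin d))) = DY x := by
      ext w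
      simp [hDYdef, map_smul]
    rwa [h3] at h2
  -- gradient of v
  have hgradv : ∀ x, HasGradientAt v (β • (x - Y x)) x := by
    intro x
    rw [hasGradientAt_iff_hasFDerivAt]
    have hvfun : v = fun x' => u (Y x') + β / 2 * ‖x' - Y x'‖ ^ 2 := funext hv
    have hvfun2 : v = fun x' => u (Y x') + β / 2 * ⟪x' - Y x', x' - Y x'⟫ := by
      rw [hvfun]
      funext x'
      rw [real_inner_self_eq_norm_sq]
    rw [hvfun2]
    have hYd := hYdiff x
    have hu1 : HasFDerivAt (fun x' => u (Y x')) ((fderiv ℝ u (Y x)).comp (DY x)) x :=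
      ((hu.differentiable two_ne_zero (Y x)).hasFDerivAt).comp x hYd
    have hW : HasFDerivAt (fun x' => x' - Y x')
        (ContinuousLinearMap.id ℝ (EuclideanSpace ℝ (Fin d)) - DY x) x :=
      (hasFDerivAt_id x).sub hYd
    have hq := (hW.inner ℝ hW).const_mul (β / 2)
    have htot := hu1.add hq
    refine htot.congr_fderiv ?_
    ext w
    simp only [ContinuousLinearMap.add_apply, ContinuousLinearMap.coe_comp',
      Function.comp_apply, ContinuousLinearMap.smul_apply, smul_eq_mul,
      fderivInnerCLM_apply, ContinuousLinearMap.prod_apply, ContinuousLinearMap.coe_sub',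
      Pi.sub_apply, ContinuousLinearMap.coe_id', id_eq,
      InnerProductSpace.toDual_apply_apply, fderiv_apply_eq_inner, hY x]
    simp only [inner_sub_left, inner_sub_right, real_inner_smul_left]
    simp only [real_inner_comm w x, real_inner_comm w (Y x),
      real_inner_comm ((DY x) w) x, real_inner_comm ((DY x) w) (Y x)]
    ring
  refine fun x => ⟨(hgradv x).gradient, ?_, ?_⟩
  · rw [(hgradv x).gradient, hY x]
  · have hgv : gradient v = fun x' => β • (x' - Y x') := gradient_eq hgradv
    have hfd2 : HasFDerivAt (fun x' => β • (x' - Y x'))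
        (β • (ContinuousLinearMap.id ℝ (EuclideanSpace ℝ (Fin d)) - DY x)) x :=
      ((hasFDerivAt_id x).sub (hYdiff x)).const_smul β
    rw [hgv, hfd2.fderiv]
    have hinv : Ring.inverse (Amap u β (Y x)) = ((Aeq u β hbij (Y x)).symm :
        EuclideanSpace ℝ (Fin d) →L[ℝ] EuclideanSpace ℝ (Fin d)) := by
      have hunit : Amap u β (Y x) = ((⟨(Aeq u β hbij (Y x) : _ →L[ℝ] _),
          ((Aeq u β hbij (Y x)).symm : _ →L[ℝ] _),
          by ext w; simp [ContinuousLinearMap.mul_apply],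
          by ext w; simp [ContinuousLinearMap.mul_apply]⟩ :
            (EuclideanSpace ℝ (Fin d) →L[ℝ] EuclideanSpace ℝ (Fin d))ˣ) :
            EuclideanSpace ℝ (Fin d) →L[ℝ] EuclideanSpace ℝ (Fin d)) := by
        rw [Units.val_mk, Aeq_coe]
      rw [hunit, Ring.inverse_unit]
      rfl
    have hAm : fderiv ℝ (gradient u) (Y x) +
        β • ContinuousLinearMap.id ℝ (EuclideanSpace ℝ (Fin d)) = Amap u β (Y x) := rfl
    rw [hAm, hinv, hDYdef]
    rw [smul_sub, smul_smul, ← sq]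
end

section
/- Let φ : ℝ^d → ℝ be β-convex, β > 0, s ∈ (0, T]. Let W_s ~ N(0, s·Id) be a Gaussian vector. Then for every y where ∂(φ + (β/2)|·|²)(y) ∋ ξ, E[e^{φ(y + W_s)}] ≥ e^{φ(y)} (1 + βs)^{−d/2} exp( s|ξ − βy|² / (2(1+βs)) ) ≥ e^{φ(y)} (1+βT)^{−d/2}. Consequently log(N_s * e^φ)(y) ≥ φ(y) − (d/2) log(1+βT). -/
open Set MeasureTheory

lemma gauss_integrable {d : ℕ} {b : ℝ} (hb : 0 < b) (w : EuclideanSpace ℝ (Fin d)) :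
    Integrable (fun v : EuclideanSpace ℝ (Fin d) =>
      Real.exp (-b * ‖v‖ ^ 2 + (inner ℝ w v : ℝ))) := by
  have h := (GaussianFourier.integrable_cexp_neg_mul_sq_norm_add
    (V := EuclideanSpace ℝ (Fin d)) (b := (b : ℂ)) (by simpa using hb) 1 w).norm
  convert h using 2 with v
  rw [Complex.norm_exp]
  norm_num [Complex.add_re, ← Complex.ofReal_pow]

lemma gauss_complex_eq {d : ℕ} (b : ℝ) (w : EuclideanSpace ℝ (Fin d)) :
    (∫ v : EuclideanSpace ℝ (Fin d),
        Complex.exp (-(b : ℂ) * (‖v‖ : ℂ) ^ 2 + 1 * ((inner ℝ w v : ℝ) : ℂ)))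
      = Complex.ofReal (∫ v : EuclideanSpace ℝ (Fin d),
          Real.exp (-b * ‖v‖ ^ 2 + (inner ℝ w v : ℝ))) := by
  have : (fun v : EuclideanSpace ℝ (Fin d) =>
      Complex.exp (-(b : ℂ) * (‖v‖ : ℂ) ^ 2 + 1 * ((inner ℝ w v : ℝ) : ℂ)))
      = fun v : EuclideanSpace ℝ (Fin d) =>
        ((Real.exp (-b * ‖v‖ ^ 2 + (inner ℝ w v : ℝ)) : ℝ) : ℂ) := by
    funext v
    rw [Complex.ofReal_exp, one_mul]
    norm_cast
  rw [this]
  exact integral_ofReal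

lemma gauss_integral {d : ℕ} {b : ℝ} (hb : 0 < b) (w : EuclideanSpace ℝ (Fin d)) :
    (∫ v : EuclideanSpace ℝ (Fin d), Real.exp (-b * ‖v‖ ^ 2 + (inner ℝ w v : ℝ))) =
      (Real.pi / b) ^ ((d : ℝ) / 2) * Real.exp (‖w‖ ^ 2 / (4 * b)) := by
  have h := GaussianFourier.integral_cexp_neg_mul_sq_norm_add
    (V := EuclideanSpace ℝ (Fin d)) (b := (b : ℂ)) (by simpa using hb) 1 w
  rw [← Complex.ofReal_inj, ← gauss_complex_eq b w, h]
  have hpb : (0:ℝ) ≤ Real.pi / b := by positivity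
  rw [Complex.ofReal_mul, Complex.ofReal_cpow hpb, Complex.ofReal_exp]
  push_cast
  norm_num [finrank_euclideanSpace]


theorem stmt10 {d : ℕ} (β T s : ℝ) (hβ : 0 < β) (hT : 0 < T)
    (hs : s ∈ Set.Ioc (0 : ℝ) T)
    (φ : EuclideanSpace ℝ (Fin d) → ℝ)
    (hφ : ConvexOn ℝ Set.univ (fun x => φ x + β / 2 * ‖x‖ ^ 2))
    (y ξ : EuclideanSpace ℝ (Fin d))
    (hξ : ∀ z, φ y + (inner ℝ (ξ - β • y) (z - y) : ℝ) - β / 2 * ‖z - y‖ ^ 2 ≤ φ z)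
    (hint : Integrable (fun z : EuclideanSpace ℝ (Fin d) =>
      (2 * Real.pi * s) ^ (-(d : ℝ) / 2) * Real.exp (-‖z‖ ^ 2 / (2 * s)) *
        Real.exp (φ (y + z)))) :
    Real.exp (φ y) * (1 + β * s) ^ (-(d : ℝ) / 2) *
        Real.exp (s * ‖ξ - β • y‖ ^ 2 / (2 * (1 + β * s)))
      ≤ (∫ z : EuclideanSpace ℝ (Fin d),
          (2 * Real.pi * s) ^ (-(d : ℝ) / 2) * Real.exp (-‖z‖ ^ 2 / (2 * s)) *
            Real.exp (φ (y + z))) ∧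
    Real.exp (φ y) * (1 + β * T) ^ (-(d : ℝ) / 2)
      ≤ (∫ z : EuclideanSpace ℝ (Fin d),
          (2 * Real.pi * s) ^ (-(d : ℝ) / 2) * Real.exp (-‖z‖ ^ 2 / (2 * s)) *
            Real.exp (φ (y + z))) ∧
    φ y - (d : ℝ) / 2 * Real.log (1 + β * T)
      ≤ Real.log (∫ z : EuclideanSpace ℝ (Fin d),
          (2 * Real.pi * s) ^ (-(d : ℝ) / 2) * Real.exp (-‖z‖ ^ 2 / (2 * s)) *
            Real.exp (φ (y + z))) := by
  obtain ⟨hs0, hsT⟩ := hs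
  set a := ξ - β • y with ha
  set r : ℝ := (d : ℝ) / 2 with hr
  set P : ℝ := 2 * Real.pi * s with hP
  set Q : ℝ := 1 + β * s with hQ
  have hPpos : 0 < P := by positivity
  have hQpos : 0 < Q := by positivity
  have hQT : 0 < 1 + β * T := by positivity
  set c : ℝ := Q / (2 * s) with hc
  have hcpos : 0 < c := by positivity
  -- pointwise lower bound
  have hle : ∀ z : EuclideanSpace ℝ (Fin d),
      P ^ (-r) * Real.exp (φ y) * Real.exp (-c * ‖z‖ ^ 2 + (inner ℝ a z : ℝ))
        ≤ P ^ (-r) * Real.exp (-‖z‖ ^ 2 / (2 * s)) * Real.exp (φ (y + z)) := by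
    intro z
    have hb := hξ (y + z)
    rw [add_sub_cancel_left] at hb
    rw [mul_assoc, mul_assoc, ← Real.exp_add, ← Real.exp_add]
    refine mul_le_mul_of_nonneg_left (Real.exp_le_exp.2 ?_) (by positivity)
    have key2 : φ y + (-c * ‖z‖ ^ 2 + (inner ℝ a z : ℝ))
        = -‖z‖ ^ 2 / (2 * s) + (φ y + (inner ℝ a z : ℝ) - β / 2 * ‖z‖ ^ 2) := by
      rw [hc, hQ]; field_simp; ring
    rw [key2]
    exact add_le_add_right hb _
  have hrr : -(d : ℝ) / 2 = -r := by rw [hr]; ring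
  rw [hrr] at hint ⊢
  have hgint : Integrable (fun z : EuclideanSpace ℝ (Fin d) =>
      P ^ (-r) * Real.exp (φ y) * Real.exp (-c * ‖z‖ ^ 2 + (inner ℝ a z : ℝ))) :=
    (gauss_integrable hcpos a).const_mul _
  have hmono := integral_mono hgint hint hle
  have hgeq : (∫ z : EuclideanSpace ℝ (Fin d),
      P ^ (-r) * Real.exp (φ y) * Real.exp (-c * ‖z‖ ^ 2 + (inner ℝ a z : ℝ)))
      = Real.exp (φ y) * Q ^ (-r) * Real.exp (s * ‖a‖ ^ 2 / (2 * Q)) := by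
    rw [MeasureTheory.integral_const_mul, gauss_integral hcpos a]
    have h1 : Real.pi / c = P / Q := by
      rw [hc, hP]; field_simp
    have h2 : ‖a‖ ^ 2 / (4 * c) = s * ‖a‖ ^ 2 / (2 * Q) := by
      rw [hc]; field_simp; ring
    have key : P ^ (-r) * (P / Q) ^ r = Q ^ (-r) := by
      rw [Real.div_rpow hPpos.le hQpos.le, Real.rpow_neg hPpos.le, Real.rpow_neg hQpos.le]
      have h3 : P ^ r ≠ 0 := (Real.rpow_pos_of_pos hPpos r).ne'
      have h4 : Q ^ r ≠ 0 := (Real.rpow_pos_of_pos hQpos r).ne'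
      field_simp
    calc P ^ (-r) * Real.exp (φ y) * ((Real.pi / c) ^ r * Real.exp (‖a‖ ^ 2 / (4 * c)))
        = (P ^ (-r) * (P / Q) ^ r) * Real.exp (φ y) * Real.exp (s * ‖a‖ ^ 2 / (2 * Q)) := by
          rw [h1, h2]; ring
      _ = Real.exp (φ y) * Q ^ (-r) * Real.exp (s * ‖a‖ ^ 2 / (2 * Q)) := by
          rw [key]; ring
  have first : Real.exp (φ y) * Q ^ (-r) * Real.exp (s * ‖a‖ ^ 2 / (2 * Q))
      ≤ ∫ z : EuclideanSpace ℝ (Fin d),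
          P ^ (-r) * Real.exp (-‖z‖ ^ 2 / (2 * s)) * Real.exp (φ (y + z)) := by
    rw [← hgeq]; exact hmono
  refine ⟨first, ?_, ?_⟩
  · have e1 : (1 + β * T) ^ (-r) ≤ Q ^ (-r) := by
      apply Real.rpow_le_rpow_of_nonpos hQpos (by nlinarith) (neg_nonpos.mpr (by positivity))
    have e2 : (1:ℝ) ≤ Real.exp (s * ‖a‖ ^ 2 / (2 * Q)) := Real.one_le_exp (by positivity)
    calc Real.exp (φ y) * (1 + β * T) ^ (-r)
        ≤ Real.exp (φ y) * Q ^ (-r) * Real.exp (s * ‖a‖ ^ 2 / (2 * Q)) := by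
          calc Real.exp (φ y) * (1 + β * T) ^ (-r)
              = Real.exp (φ y) * (1 + β * T) ^ (-r) * 1 := by ring
            _ ≤ _ := mul_le_mul (mul_le_mul_of_nonneg_left e1 (Real.exp_pos _).le) e2
                zero_le_one (by positivity)
      _ ≤ _ := first
  · have e1 : (1 + β * T) ^ (-r) ≤ Q ^ (-r) := by
      apply Real.rpow_le_rpow_of_nonpos hQpos (by nlinarith) (neg_nonpos.mpr (by positivity))
    have e2 : (1:ℝ) ≤ Real.exp (s * ‖a‖ ^ 2 / (2 * Q)) := Real.one_le_exp (by positivity)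
    have second : Real.exp (φ y) * (1 + β * T) ^ (-r)
        ≤ ∫ z : EuclideanSpace ℝ (Fin d),
            P ^ (-r) * Real.exp (-‖z‖ ^ 2 / (2 * s)) * Real.exp (φ (y + z)) := by
      calc Real.exp (φ y) * (1 + β * T) ^ (-r)
          ≤ Real.exp (φ y) * Q ^ (-r) * Real.exp (s * ‖a‖ ^ 2 / (2 * Q)) := by
            calc Real.exp (φ y) * (1 + β * T) ^ (-r)
                = Real.exp (φ y) * (1 + β * T) ^ (-r) * 1 := by ring
              _ ≤ _ := mul_le_mul (mul_le_mul_of_nonneg_left e1 (Real.exp_pos _).le) e2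
                  zero_le_one (by positivity)
        _ ≤ _ := first
    have hlog : φ y - r * Real.log (1 + β * T)
        = Real.log (Real.exp (φ y) * (1 + β * T) ^ (-r)) := by
      rw [Real.log_mul (Real.exp_pos _).ne' (Real.rpow_pos_of_pos hQT _).ne',
        Real.log_exp, Real.log_rpow hQT]
      ring
    rw [hlog]
    exact Real.log_le_log (by positivity) second
end

section
/- Let φ : ℝ^d → ℝ be β-convex with φ(0) = 0. Fix η ∈ (0,1), T > 0, and set U := log E[e^{φ(W_{ηT})}] (assumed finite). Then for every R > 0 and x ∈ ℝ^d, φ(x) ≤ U + |x|²/(2ηT) + (1/2)(β + 1/(ηT))R² + log( (2πηT)^{d/2} / |B_R| ), where |B_R| is the Lebesgue volume of the ball of radius R. -/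
open Set MeasureTheory

open scoped RealInnerProductSpace

set_option maxHeartbeats 1000000 in
theorem stmt11 {d : ℕ} (β T η : ℝ) (hβ : 0 < β) (hT : 0 < T)
    (hη : η ∈ Set.Ioo (0 : ℝ) 1)
    (φ : EuclideanSpace ℝ (Fin d) → ℝ)
    (hφ : ConvexOn ℝ Set.univ (fun x => φ x + β / 2 * ‖x‖ ^ 2))
    (hφ0 : φ 0 = 0)
    (hint : Integrable (fun y : EuclideanSpace ℝ (Fin d) =>
      (2 * Real.pi * (η * T)) ^ (-(d : ℝ) / 2) *
        Real.exp (φ y - ‖y‖ ^ 2 / (2 * (η * T))))) :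
    ∀ R > (0 : ℝ), ∀ x : EuclideanSpace ℝ (Fin d),
      φ x ≤ Real.log (∫ y : EuclideanSpace ℝ (Fin d),
          (2 * Real.pi * (η * T)) ^ (-(d : ℝ) / 2) *
            Real.exp (φ y - ‖y‖ ^ 2 / (2 * (η * T))))
        + ‖x‖ ^ 2 / (2 * (η * T))
        + (1 / 2) * (β + 1 / (η * T)) * R ^ 2
        + Real.log ((2 * Real.pi * (η * T)) ^ ((d : ℝ) / 2) /
            (MeasureTheory.volume (Metric.ball (0 : EuclideanSpace ℝ (Fin d)) R)).toReal) := by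
  obtain ⟨hη0, -⟩ := hη
  intro R hR x
  have ha : 0 < η * T := mul_pos hη0 hT
  have h2pa : (0:ℝ) < 2 * Real.pi * (η * T) := by positivity
  set c : ℝ := (2 * Real.pi * (η * T)) ^ (-(d : ℝ) / 2) with hc_def
  have hc : 0 < c := Real.rpow_pos_of_pos h2pa _
  set ψ : EuclideanSpace ℝ (Fin d) → ℝ := fun y => φ y + β / 2 * ‖y‖ ^ 2 with hψ_def
  set F : EuclideanSpace ℝ (Fin d) → ℝ := fun y => φ y - ‖y‖ ^ 2 / (2 * (η * T)) with hF_def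
  -- continuity
  have hψc : Continuous ψ := by
    rw [← continuousOn_univ]
    exact hφ.continuousOn isOpen_univ
  have hφc : Continuous φ := by
    have : φ = fun y => ψ y - β / 2 * ‖y‖ ^ 2 := by
      funext y; simp [hψ_def]
    rw [this]
    exact hψc.sub (continuous_const.mul (continuous_norm.pow 2))
  have hFc : Continuous F := by
    apply hφc.sub
    exact (continuous_norm.pow 2).div_const _
  -- measures
  set μ : Measure (EuclideanSpace ℝ (Fin d)) := volume.restrict (Metric.ball x R) with hμ_def
  set μ0 : Measure (EuclideanSpace ℝ (Fin d)) := volume.restrict (Metric.ball 0 R) with hμ0_def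
  have hvol_eq : volume (Metric.ball x R) = volume (Metric.ball (0 : EuclideanSpace ℝ (Fin d)) R) :=
    Measure.addHaar_ball_center volume x R
  have hvolB_lt : volume (Metric.ball x R) < ⊤ := measure_ball_lt_top
  have hvolB_pos : 0 < volume (Metric.ball x R) := Metric.measure_ball_pos _ _ hR
  have hμuniv : μ Set.univ = volume (Metric.ball x R) := by
    rw [hμ_def, Measure.restrict_apply_univ]
  have hμ0univ : μ0 Set.univ = volume (Metric.ball x R) := by
    rw [hμ0_def, Measure.restrict_apply_univ, hvol_eq]
  haveI : IsFiniteMeasure μ := ⟨by rw [hμuniv]; exact hvolB_lt⟩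
  haveI : NeZero μ := ⟨fun h => hvolB_pos.ne' (by rw [← hμuniv, h]; simp)⟩
  haveI : IsFiniteMeasure μ0 := ⟨by rw [hμ0univ]; exact hvolB_lt⟩
  set V : ℝ := (volume (Metric.ball x R)).toReal with hV_def
  have hV_pos : 0 < V := ENNReal.toReal_pos hvolB_pos.ne' hvolB_lt.ne
  have hV0 : (volume (Metric.ball (0 : EuclideanSpace ℝ (Fin d)) R)).toReal = V := by
    rw [hV_def, hvol_eq]
  -- integrability of continuous functions on the balls
  have hintcont : ∀ {G : Type} [NormedAddCommGroup G] [NormedSpace ℝ G]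
      (g : EuclideanSpace ℝ (Fin d) → G), Continuous g →
      (Integrable g μ ∧ Integrable g μ0) := by
    intro G _ _ g hg
    constructor
    · exact (hg.continuousOn.integrableOn_compact (isCompact_closedBall x R)).mono_set
        Metric.ball_subset_closedBall
    · exact (hg.continuousOn.integrableOn_compact (isCompact_closedBall 0 R)).mono_set
        Metric.ball_subset_closedBall
  -- measure preserving translation
  have hpre : (fun z : EuclideanSpace ℝ (Fin d) => x + z) ⁻¹' Metric.ball x R
      = Metric.ball (0 : EuclideanSpace ℝ (Fin d)) R := by
    ext z
    simp [Metric.mem_ball, dist_eq_norm]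
  have hmp : MeasurePreserving (fun z : EuclideanSpace ℝ (Fin d) => x + z) μ0 μ := by
    have h1 := (measurePreserving_add_left (volume : Measure (EuclideanSpace ℝ (Fin d))) x).restrict_preimage
      (s := Metric.ball x R) Metric.isOpen_ball.measurableSet
    rwa [hpre] at h1
  have hemb : MeasurableEmbedding (fun z : EuclideanSpace ℝ (Fin d) => x + z) :=
    (Homeomorph.addLeft x).measurableEmbedding
  have hcomp : ∀ (g : EuclideanSpace ℝ (Fin d) → ℝ),
      ∫ y, g y ∂μ = ∫ z, g (x + z) ∂μ0 := fun g => (hmp.integral_comp hemb g).symm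
  -- integral of identity over centered ball is zero
  have hpre0 : (fun z : EuclideanSpace ℝ (Fin d) => -z) ⁻¹' Metric.ball (0:EuclideanSpace ℝ (Fin d)) R
      = Metric.ball (0 : EuclideanSpace ℝ (Fin d)) R := by
    ext z
    simp [Metric.mem_ball, dist_eq_norm]
  have hmpn : MeasurePreserving (fun z : EuclideanSpace ℝ (Fin d) => -z) μ0 μ0 := by
    have h1 := (Measure.measurePreserving_neg (volume : Measure (EuclideanSpace ℝ (Fin d)))).restrict_preimage
      (s := Metric.ball 0 R) Metric.isOpen_ball.measurableSet
    rwa [hpre0] at h1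
  have hembn : MeasurableEmbedding (fun z : EuclideanSpace ℝ (Fin d) => -z) :=
    (Homeomorph.neg (EuclideanSpace ℝ (Fin d))).measurableEmbedding
  have hid_int0 : Integrable (fun z : EuclideanSpace ℝ (Fin d) => z) μ0 :=
    (hintcont _ continuous_id).2
  have hid_int : Integrable (fun z : EuclideanSpace ℝ (Fin d) => z) μ :=
    (hintcont _ continuous_id).1
  have hid0 : ∫ z, z ∂μ0 = (0 : EuclideanSpace ℝ (Fin d)) := by
    have h1 : ∫ z, (-z) ∂μ0 = ∫ z, z ∂μ0 :=
      hmpn.integral_comp hembn (fun z => z)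
    rw [integral_neg] at h1
    have h2 : (2:ℝ) • ∫ z, z ∂μ0 = 0 := by
      rw [two_smul]
      nth_rewrite 1 [← h1]
      simp
    have := smul_eq_zero.mp h2
    simpa using this
  -- average of identity over the ball is x
  have hidμ : ∫ y, y ∂μ = V • x := by
    have h1 : ∫ z, (x + z) ∂μ0 = ∫ y, y ∂μ := hmp.integral_comp hemb (fun y => y)
    rw [← h1, integral_add (integrable_const x) hid_int0, hid0, add_zero, integral_const,
      measureReal_def, hμ0univ, ← hV_def]
  have havg_id : ⨍ y, y ∂μ = x := by
    rw [average_eq, hidμ, measureReal_def, hμuniv, ← hV_def, smul_smul, inv_mul_cancel₀ hV_pos.ne', one_smul]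
  -- Jensen for ψ
  have hψJ : ψ x ≤ ⨍ y, ψ y ∂μ := by
    have h := hφ.map_average_le hψc.continuousOn isClosed_univ
      (Filter.Eventually.of_forall fun _ => Set.mem_univ _) hid_int
      ((hintcont _ hψc).1)
    rwa [havg_id] at h
  -- average of norm squared
  have hnorm_int : Integrable (fun y : EuclideanSpace ℝ (Fin d) => ‖y‖^2) μ :=
    (hintcont _ (continuous_norm.pow 2)).1
  have hnorm_int0 : Integrable (fun y : EuclideanSpace ℝ (Fin d) => ‖y‖^2) μ0 :=
    (hintcont _ (continuous_norm.pow 2)).2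
  have hinner_int : Integrable (fun z : EuclideanSpace ℝ (Fin d) => ⟪x, z⟫) μ0 :=
    (hintcont _ (continuous_const.inner continuous_id)).2
  have hinner0 : ∫ z, ⟪x, z⟫ ∂μ0 = 0 := by
    rw [integral_inner hid_int0 x, hid0, inner_zero_right]
  have hnormμ : ∫ y, ‖y‖^2 ∂μ ≤ V * (‖x‖^2 + R^2) := by
    rw [hcomp (fun y => ‖y‖^2)]
    have hexp : (fun z : EuclideanSpace ℝ (Fin d) => ‖x + z‖^2)
        = fun z => ‖x‖^2 + 2*⟪x,z⟫ + ‖z‖^2 := by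
      funext z; exact norm_add_sq_real x z
    rw [hexp]
    have hzz : ∫ z, ‖z‖^2 ∂μ0 ≤ V * R^2 := by
      have hae : ∀ᵐ z ∂μ0, ‖z‖^2 ≤ R^2 := by
        rw [hμ0_def]
        filter_upwards [ae_restrict_mem Metric.isOpen_ball.measurableSet] with z hz
        have hzR : ‖z‖ < R := by simpa [Metric.mem_ball, dist_eq_norm] using hz
        nlinarith [norm_nonneg z]
      calc ∫ z, ‖z‖^2 ∂μ0 ≤ ∫ _z, R^2 ∂μ0 :=
            integral_mono_ae hnorm_int0 (integrable_const _) hae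
        _ = V * R^2 := by rw [integral_const, measureReal_def, hμ0univ, ← hV_def, smul_eq_mul]
    have heq : ∫ z, (‖x‖^2 + 2*⟪x,z⟫ + ‖z‖^2) ∂μ0
        = V * ‖x‖^2 + ∫ z, ‖z‖^2 ∂μ0 := by
      rw [integral_add (by exact (integrable_const _).add (hinner_int.const_mul 2)) hnorm_int0,
        integral_add (integrable_const _) (hinner_int.const_mul 2),
        integral_const_mul, hinner0, integral_const, measureReal_def, hμ0univ, ← hV_def, smul_eq_mul]
      ring
    rw [heq]
    nlinarith [hzz]
  have havg_norm : ⨍ y, ‖y‖^2 ∂μ ≤ ‖x‖^2 + R^2 := by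
    rw [average_eq, measureReal_def, hμuniv, ← hV_def, smul_eq_mul]
    rw [inv_mul_le_iff₀ hV_pos]
    exact hnormμ
  -- the average of F is bounded below
  have hγ : (0:ℝ) ≤ β/2 + 1/(2*(η*T)) := by positivity
  have hFdec : (fun y => F y) = fun y => ψ y - (β/2 + 1/(2*(η*T))) * ‖y‖^2 := by
    funext y
    simp only [hF_def, hψ_def]
    field_simp
    ring
  have hFavg : φ x - ‖x‖^2/(2*(η*T)) - (1/2)*(β + 1/(η*T))*R^2 ≤ ⨍ y, F y ∂μ := by
    have h1 : ⨍ y, F y ∂μ = ⨍ y, ψ y ∂μ - (β/2 + 1/(2*(η*T))) * ⨍ y, ‖y‖^2 ∂μ := by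
      simp only [average_eq, smul_eq_mul]
      rw [hFdec, integral_sub (hintcont _ hψc).1 (hnorm_int.const_mul _), integral_const_mul]
      ring
    rw [h1]
    have h2 := mul_le_mul_of_nonneg_left havg_norm hγ
    have h3 : ψ x = φ x + β / 2 * ‖x‖ ^ 2 := rfl
    have h4 : (1/2)*(β + 1/(η*T)) = β/2 + 1/(2*(η*T)) := by
      field_simp
    have h5 : (β/2 + 1/(2*(η*T))) * ‖x‖^2 = β/2*‖x‖^2 + ‖x‖^2/(2*(η*T)) := by
      field_simp
    have h6 : (β/2 + 1/(2*(η*T))) * (‖x‖^2 + R^2)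
        = (β/2 + 1/(2*(η*T))) * ‖x‖^2 + (β/2 + 1/(2*(η*T))) * R^2 := by ring
    have h7 : (1/2)*(β + 1/(η*T))*R^2 = (β/2 + 1/(2*(η*T))) * R^2 := by rw [h4]
    have hψJ' : φ x + β / 2 * ‖x‖ ^ 2 ≤ ⨍ y, ψ y ∂μ := by
      rw [← h3]; exact hψJ
    linarith [hψJ', h2, h5, h6, h7]
  -- Jensen for exp
  have hexpJ : Real.exp (⨍ y, F y ∂μ) ≤ ⨍ y, Real.exp (F y) ∂μ := by
    exact convexOn_exp.map_average_le (f := F) Real.continuous_exp.continuousOn isClosed_univ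
      (Filter.Eventually.of_forall fun _ => Set.mem_univ _) (hintcont _ hFc).1
      ((hintcont _ (Real.continuous_exp.comp hFc)).1)
  -- lower bound for the main integral
  set I : ℝ := ∫ y : EuclideanSpace ℝ (Fin d), c * Real.exp (φ y - ‖y‖ ^ 2 / (2 * (η * T)))
    with hI_def
  have hIlb : c * V * Real.exp (⨍ y, F y ∂μ) ≤ I := by
    have s1 : c * V * Real.exp (⨍ y, F y ∂μ) ≤ c * V * ⨍ y, Real.exp (F y) ∂μ := by
      apply mul_le_mul_of_nonneg_left hexpJ (by positivity)
    have s2 : c * V * ⨍ y, Real.exp (F y) ∂μ = ∫ y, c * Real.exp (F y) ∂μ := by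
      rw [average_eq, measureReal_def, hμuniv, ← hV_def, smul_eq_mul, integral_const_mul]
      field_simp
    have s3 : ∫ y, c * Real.exp (F y) ∂μ ≤ I := by
      rw [hμ_def]
      apply setIntegral_le_integral hint
      filter_upwards with y
      positivity
    linarith
  have hIpos : 0 < I := lt_of_lt_of_le (by positivity) hIlb
  have hlog : Real.log (c * V * Real.exp (⨍ y, F y ∂μ)) ≤ Real.log I :=
    Real.log_le_log (by positivity) hIlb
  rw [Real.log_mul (by positivity) (Real.exp_pos _).ne', Real.log_mul hc.ne' hV_pos.ne',
    Real.log_exp, hc_def, Real.log_rpow h2pa] at hlog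
  -- final assembly
  rw [hV0, Real.log_div (Real.rpow_pos_of_pos h2pa _).ne' hV_pos.ne', Real.log_rpow h2pa]
  have := hFavg
  linarith
end

section
/- Let φ : ℝ^d → ℝ be continuous with upper bound φ(y) ≤ C_η + |y|²/(2ηT) for constants C_η, η ∈ (0,1), T > 0, and lower bound φ ≥ −m₁ on the unit ball B₁. Then for every s ∈ (0, ηT) there exist constants C_s, a_s > 0 (depending only on β, T, d, η, s, C_η, m₁) such that for all R ≥ 1 and x ∈ ℝ^d, the tail ratio (N_s * (e^φ 1_{B_R^c}))(x) / (N_s * (e^φ 1_{B_R}))(x) ≤ C_s · exp( −(1/4)(1/s − 1/(ηT))R² + a_s|x|² ). -/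
set_option maxHeartbeats 2000000

open Set MeasureTheory

theorem stmt16 {d : ℕ} (β T η s Cη m₁ : ℝ) (hβ : 0 < β) (hT : 0 < T)
    (hη : η ∈ Set.Ioo (0 : ℝ) 1) (hs : s ∈ Set.Ioo (0 : ℝ) (η * T))
    (φ : EuclideanSpace ℝ (Fin d) → ℝ) (hφc : Continuous φ)
    (hub : ∀ y, φ y ≤ Cη + ‖y‖ ^ 2 / (2 * (η * T)))
    (hlb : ∀ y ∈ Metric.ball (0 : EuclideanSpace ℝ (Fin d)) 1, -m₁ ≤ φ y) :
    ∃ Cs > (0 : ℝ), ∃ as > (0 : ℝ), ∀ R ≥ (1 : ℝ), ∀ x : EuclideanSpace ℝ (Fin d),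
      (∫ y in (Metric.ball (0 : EuclideanSpace ℝ (Fin d)) R)ᶜ,
          (2 * Real.pi * s) ^ (-(d : ℝ) / 2) *
            Real.exp (-‖x - y‖ ^ 2 / (2 * s)) * Real.exp (φ y)) /
        (∫ y in Metric.ball (0 : EuclideanSpace ℝ (Fin d)) R,
          (2 * Real.pi * s) ^ (-(d : ℝ) / 2) *
            Real.exp (-‖x - y‖ ^ 2 / (2 * s)) * Real.exp (φ y))
      ≤ Cs * Real.exp (-(1 / 4) * (1 / s - 1 / (η * T)) * R ^ 2 + as * ‖x‖ ^ 2) := by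
  obtain ⟨hη0, hη1⟩ := hη
  obtain ⟨hs0, hsT⟩ := hs
  have hηT : 0 < η * T := by positivity
  set a : ℝ := 1 / s - 1 / (η * T) with ha_def
  have ha : 0 < a := by
    have h1 : 1 / (η * T) < 1 / s := one_div_lt_one_div_of_lt hs0 hsT
    rw [ha_def]; linarith
  set K : ℝ := (2 * Real.pi * s) ^ (-(d : ℝ) / 2) with hK_def
  have hK : 0 < K := Real.rpow_pos_of_pos (by positivity) _
  set V : ℝ := (volume (Metric.ball (0 : EuclideanSpace ℝ (Fin d)) 1)).toReal with hV_def
  have hV : 0 < V := by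
    rw [hV_def]
    exact ENNReal.toReal_pos (Metric.measure_ball_pos volume 0 one_pos).ne'
      measure_ball_lt_top.ne
  have hb8 : 0 < a / 8 := by positivity
  set I : ℝ := ∫ z : EuclideanSpace ℝ (Fin d), Real.exp (-(a / 8) * ‖z‖ ^ 2) with hI_def
  have hI : 0 < I := by
    rw [hI_def, GaussianFourier.integral_rexp_neg_mul_sq_norm hb8]
    positivity
  have hf_int : Integrable
      (fun z : EuclideanSpace ℝ (Fin d) => Real.exp (-(a / 8) * ‖z‖ ^ 2)) := by
    have h := (GaussianFourier.integrable_cexp_neg_mul_sq_norm_add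
      (V := EuclideanSpace ℝ (Fin d)) (b := ((a / 8 : ℝ) : ℂ)) (by simpa using hb8)
      0 0).norm
    convert h using 2 with z
    rw [Complex.norm_exp]
    norm_num
    left; norm_cast
  set c1 : ℝ := 5 / (4 * s ^ 2 * a) with hc1_def
  refine ⟨Real.exp (Cη + m₁ + 1 / s) * I / V, by positivity,
    c1 + 1 / s, by positivity, ?_⟩
  intro R hR x
  have hR0 : (0 : ℝ) < R := lt_of_lt_of_le one_pos hR
  set μp : EuclideanSpace ℝ (Fin d) := (s * a)⁻¹ • x with hμ_def
  have hsa : (0 : ℝ) < s * a := mul_pos hs0 ha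
  have hμn : ‖μp‖ ^ 2 = (s * a)⁻¹ ^ 2 * ‖x‖ ^ 2 := by
    rw [hμ_def, norm_smul, Real.norm_eq_abs, abs_of_pos (by positivity)]
    ring
  set A : ℝ := Cη - a / 4 * R ^ 2 + c1 * ‖x‖ ^ 2 with hA_def
  set C : ℝ := K * Real.exp A with hC_def
  have hC : 0 < C := by positivity
  -- key pointwise exponent inequality on the complement of the ball
  have hexp_key : ∀ y : EuclideanSpace ℝ (Fin d), R ≤ ‖y‖ →
      -‖x - y‖ ^ 2 / (2 * s) + φ y ≤ A + -(a / 8) * ‖y - μp‖ ^ 2 := by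
    intro y hy
    have hub' := hub y
    obtain ⟨p, hp⟩ : ∃ p : ℝ, (inner ℝ x y : ℝ) = p := ⟨_, rfl⟩
    have hxy : ‖x - y‖ ^ 2 = ‖x‖ ^ 2 - 2 * p + ‖y‖ ^ 2 := by
      rw [← hp]; exact norm_sub_sq_real x y
    have hyμ : ‖y - μp‖ ^ 2
        = ‖y‖ ^ 2 - 2 * ((s * a)⁻¹ * p) + (s * a)⁻¹ ^ 2 * ‖x‖ ^ 2 := by
      rw [norm_sub_sq_real, real_inner_smul_right, real_inner_comm, hp, hμn]
    have haux : ‖y‖ ^ 2 / (2 * (η * T)) = ‖y‖ ^ 2 / (2 * s) - a / 2 * ‖y‖ ^ 2 := by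
      rw [ha_def]
      field_simp
      ring
    have hid : -‖x - y‖ ^ 2 / (2 * s) + (‖y‖ ^ 2 / (2 * s) - a / 2 * ‖y‖ ^ 2)
        = -(a / 2) * ‖y - μp‖ ^ 2 + ‖x‖ ^ 2 / (2 * s ^ 2 * a) - ‖x‖ ^ 2 / (2 * s) := by
      rw [hxy, hyμ]
      field_simp
      ring
    have htri : ‖y‖ ^ 2 ≤ 3 / 2 * ‖y - μp‖ ^ 2 + 3 * ‖μp‖ ^ 2 := by
      have h1 : ‖y‖ ≤ ‖y - μp‖ + ‖μp‖ := by
        simpa using norm_add_le (y - μp) μp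
      nlinarith [norm_nonneg (y - μp), norm_nonneg μp,
        sq_nonneg (‖y - μp‖ - 2 * ‖μp‖), norm_nonneg y]
    have hR2 : R ^ 2 ≤ ‖y‖ ^ 2 := by nlinarith
    have hAineq : -(a / 2) * ‖y - μp‖ ^ 2
        ≤ -(a / 8) * ‖y - μp‖ ^ 2 - a / 4 * ‖y‖ ^ 2 + 3 * a / 4 * ‖μp‖ ^ 2 := by
      nlinarith [mul_nonneg (by positivity : (0 : ℝ) ≤ a / 4)
        (sub_nonneg.mpr htri)]
    have hBineq : a / 4 * R ^ 2 ≤ a / 4 * ‖y‖ ^ 2 := by nlinarith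
    have hCeq : 3 * a / 4 * ‖μp‖ ^ 2 + ‖x‖ ^ 2 / (2 * s ^ 2 * a) = c1 * ‖x‖ ^ 2 := by
      rw [hμn, hc1_def]
      field_simp
      ring
    have hxs : 0 ≤ ‖x‖ ^ 2 / (2 * s) := by positivity
    rw [hA_def]
    linarith
  -- numerator bound
  have hnum : (∫ y in (Metric.ball (0 : EuclideanSpace ℝ (Fin d)) R)ᶜ,
      K * Real.exp (-‖x - y‖ ^ 2 / (2 * s)) * Real.exp (φ y)) ≤ C * I := by
    have hg_int : Integrable
        (fun y : EuclideanSpace ℝ (Fin d) => C * Real.exp (-(a / 8) * ‖y - μp‖ ^ 2)) :=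
      (hf_int.comp_sub_right μp).const_mul C
    have h1 : (∫ y in (Metric.ball (0 : EuclideanSpace ℝ (Fin d)) R)ᶜ,
        K * Real.exp (-‖x - y‖ ^ 2 / (2 * s)) * Real.exp (φ y))
        ≤ ∫ y in (Metric.ball (0 : EuclideanSpace ℝ (Fin d)) R)ᶜ,
          C * Real.exp (-(a / 8) * ‖y - μp‖ ^ 2) := by
      apply integral_mono_of_nonneg
      · filter_upwards with y
        positivity
      · exact hg_int.restrict
      · filter_upwards [ae_restrict_mem measurableSet_ball.compl] with y hy
        have hy' : R ≤ ‖y‖ := by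
          simp only [Set.mem_compl_iff, Metric.mem_ball, dist_zero_right, not_lt] at hy
          exact hy
        calc K * Real.exp (-‖x - y‖ ^ 2 / (2 * s)) * Real.exp (φ y)
            = K * Real.exp (-‖x - y‖ ^ 2 / (2 * s) + φ y) := by
              rw [mul_assoc, ← Real.exp_add]
          _ ≤ K * Real.exp (A + -(a / 8) * ‖y - μp‖ ^ 2) := by
              have := hexp_key y hy'
              gcongr
          _ = C * Real.exp (-(a / 8) * ‖y - μp‖ ^ 2) := by
              rw [hC_def, Real.exp_add, mul_assoc]
    have h2 : (∫ y in (Metric.ball (0 : EuclideanSpace ℝ (Fin d)) R)ᶜ,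
        C * Real.exp (-(a / 8) * ‖y - μp‖ ^ 2))
        ≤ ∫ y : EuclideanSpace ℝ (Fin d), C * Real.exp (-(a / 8) * ‖y - μp‖ ^ 2) := by
      apply setIntegral_le_integral hg_int
      filter_upwards with y
      positivity
    have h3 : (∫ y : EuclideanSpace ℝ (Fin d), C * Real.exp (-(a / 8) * ‖y - μp‖ ^ 2))
        = C * I := by
      rw [integral_const_mul, hI_def,
        integral_sub_right_eq_self
          (fun z : EuclideanSpace ℝ (Fin d) => Real.exp (-(a / 8) * ‖z‖ ^ 2)) μp]
    linarith
  -- denominator bound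
  have hL : 0 < V * (K * Real.exp (-m₁) * Real.exp (-(‖x‖ + 1) ^ 2 / (2 * s))) := by
    positivity
  have hfc : Continuous (fun y : EuclideanSpace ℝ (Fin d) =>
      K * Real.exp (-‖x - y‖ ^ 2 / (2 * s)) * Real.exp (φ y)) := by
    fun_prop
  have hIntR : IntegrableOn (fun y : EuclideanSpace ℝ (Fin d) =>
      K * Real.exp (-‖x - y‖ ^ 2 / (2 * s)) * Real.exp (φ y))
      (Metric.ball (0 : EuclideanSpace ℝ (Fin d)) R) :=
    (hfc.continuousOn.integrableOn_compact
      (isCompact_closedBall (0 : EuclideanSpace ℝ (Fin d)) R)).mono_set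
      Metric.ball_subset_closedBall
  have hIntOne : IntegrableOn (fun y : EuclideanSpace ℝ (Fin d) =>
      K * Real.exp (-‖x - y‖ ^ 2 / (2 * s)) * Real.exp (φ y))
      (Metric.ball (0 : EuclideanSpace ℝ (Fin d)) 1) :=
    hIntR.mono_set (Metric.ball_subset_ball hR)
  have hden : V * (K * Real.exp (-m₁) * Real.exp (-(‖x‖ + 1) ^ 2 / (2 * s)))
      ≤ ∫ y in Metric.ball (0 : EuclideanSpace ℝ (Fin d)) R,
      K * Real.exp (-‖x - y‖ ^ 2 / (2 * s)) * Real.exp (φ y) := by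
    have e1 : (∫ _ in Metric.ball (0 : EuclideanSpace ℝ (Fin d)) 1,
        (K * Real.exp (-m₁) * Real.exp (-(‖x‖ + 1) ^ 2 / (2 * s))))
        = V * (K * Real.exp (-m₁) * Real.exp (-(‖x‖ + 1) ^ 2 / (2 * s))) := by
      rw [setIntegral_const, smul_eq_mul, hV_def, measureReal_def]
    have e2 : (∫ _ in Metric.ball (0 : EuclideanSpace ℝ (Fin d)) 1,
        (K * Real.exp (-m₁) * Real.exp (-(‖x‖ + 1) ^ 2 / (2 * s))))
        ≤ ∫ y in Metric.ball (0 : EuclideanSpace ℝ (Fin d)) 1,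
          K * Real.exp (-‖x - y‖ ^ 2 / (2 * s)) * Real.exp (φ y) := by
      apply setIntegral_mono_on
        (integrableOn_const measure_ball_lt_top.ne) hIntOne
        measurableSet_ball
      intro y hy
      have hy1 : ‖y‖ < 1 := by simpa [dist_zero_right] using hy
      have hxy : ‖x - y‖ ^ 2 ≤ (‖x‖ + 1) ^ 2 := by
        have h1 : ‖x - y‖ ≤ ‖x‖ + ‖y‖ := norm_sub_le x y
        nlinarith [norm_nonneg (x - y), norm_nonneg x, norm_nonneg y]
      have hφy := hlb y hy
      have hre : K * Real.exp (-m₁) * Real.exp (-(‖x‖ + 1) ^ 2 / (2 * s))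
          = K * Real.exp (-(‖x‖ + 1) ^ 2 / (2 * s)) * Real.exp (-m₁) := by ring
      rw [hre]
      gcongr
    have e3 : (∫ y in Metric.ball (0 : EuclideanSpace ℝ (Fin d)) 1,
        K * Real.exp (-‖x - y‖ ^ 2 / (2 * s)) * Real.exp (φ y))
        ≤ ∫ y in Metric.ball (0 : EuclideanSpace ℝ (Fin d)) R,
          K * Real.exp (-‖x - y‖ ^ 2 / (2 * s)) * Real.exp (φ y) := by
      apply setIntegral_mono_set hIntR
      · filter_upwards with y; positivity
      · exact HasSubset.Subset.eventuallyLE (Metric.ball_subset_ball hR)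
    linarith
  -- conclusion
  have hnum0 : 0 ≤ ∫ y in (Metric.ball (0 : EuclideanSpace ℝ (Fin d)) R)ᶜ,
      K * Real.exp (-‖x - y‖ ^ 2 / (2 * s)) * Real.exp (φ y) :=
    setIntegral_nonneg measurableSet_ball.compl (fun y _ => by positivity)
  have hmain : (∫ y in (Metric.ball (0 : EuclideanSpace ℝ (Fin d)) R)ᶜ,
      K * Real.exp (-‖x - y‖ ^ 2 / (2 * s)) * Real.exp (φ y)) /
      (∫ y in Metric.ball (0 : EuclideanSpace ℝ (Fin d)) R,
        K * Real.exp (-‖x - y‖ ^ 2 / (2 * s)) * Real.exp (φ y))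
      ≤ (C * I) / (V * (K * Real.exp (-m₁) * Real.exp (-(‖x‖ + 1) ^ 2 / (2 * s)))) :=
    div_le_div₀ (by positivity) hnum hL hden
  refine hmain.trans ?_
  have hx2 : (‖x‖ + 1) ^ 2 / (2 * s) ≤ 1 / s + ‖x‖ ^ 2 / s := by
    have h1 : (‖x‖ + 1) ^ 2 ≤ 2 * ‖x‖ ^ 2 + 2 := by nlinarith [sq_nonneg (‖x‖ - 1)]
    have h2 : (‖x‖ + 1) ^ 2 / (2 * s) ≤ (2 * ‖x‖ ^ 2 + 2) / (2 * s) := by gcongr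
    have h3 : (2 * ‖x‖ ^ 2 + 2) / (2 * s) = 1 / s + ‖x‖ ^ 2 / s := by
      field_simp; ring
    linarith
  rw [div_le_iff₀ hL]
  calc C * I = K * I * Real.exp A := by rw [hC_def]; ring
    _ ≤ K * I * Real.exp ((Cη + m₁ + 1 / s)
          + (-(1 / 4) * a * R ^ 2 + (c1 + 1 / s) * ‖x‖ ^ 2)
          + -m₁ + -(‖x‖ + 1) ^ 2 / (2 * s)) := by
        refine mul_le_mul_of_nonneg_left (Real.exp_le_exp.mpr ?_)
          (le_of_lt (mul_pos hK hI))
        rw [hA_def]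
        have hd : -(‖x‖ + 1) ^ 2 / (2 * s) = -((‖x‖ + 1) ^ 2 / (2 * s)) := by ring
        rw [hd]
        have hmul : (c1 + 1 / s) * ‖x‖ ^ 2 = c1 * ‖x‖ ^ 2 + ‖x‖ ^ 2 / s := by ring
        linarith [hx2, hmul]
    _ = Real.exp (Cη + m₁ + 1 / s) * I / V *
          Real.exp (-(1 / 4) * a * R ^ 2 + (c1 + 1 / s) * ‖x‖ ^ 2) *
          (V * (K * Real.exp (-m₁) * Real.exp (-(‖x‖ + 1) ^ 2 / (2 * s)))) := by
        simp only [Real.exp_add]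
        field_simp
end
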